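/- Let γ : ℝ → E be a unit-speed curve and v₂ : ℝ → E a differentiable map such that for every t the vectors {γ'(t), v₂(t)} are orthonormal, and suppose there is a constant κ₁ > 0 with γ''(t) = κ₁·v₂(t) and v₂'(t) = -κ₁·γ'(t) for all t (a circle of osculating order 2). Assume γ is a Legendre curve (γ'_{2n+α}(t) = 0 and (v₂(t))_{2n+α} = 0 for all t and all α ∈ {1,…,s}) and that for every t, φ(γ'(t)) lies in the linear span of {γ'(t), v₂(t), e_{2n+1}, …, e_{2n+s}}. Then there exists q ∈ ℝ with |q| = κ₁ such that γ''(t) = -q·φ(γ'(t)) for all t; that is, γ is a magnetic circle generated by the magnetic field F_{±κ₁}. -/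

import Mathlib

open scoped RealInnerProductSpace

/-- The structure tensor `φ` of the standard `C`-manifold structure on `ℝ^{2n+s}`:
`(φv)_i = v_{n+i}`, `(φv)_{n+i} = -v_i` for `0 ≤ i < n`, and `(φv)_{2n+α} = 0`. -/
noncomputable def phi (n s : ℕ) (v : EuclideanSpace ℝ (Fin (2*n+s))) :
    EuclideanSpace ℝ (Fin (2*n+s)) := WithLp.toLp 2 fun (k : Fin (2*n+s)) =>
  if _h1 : (k : ℕ) < n then v ⟨n + (k : ℕ), by omega⟩
  else if _h2 : (k : ℕ) < 2*n then -v ⟨(k : ℕ) - n, by omega⟩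
  else 0

/-- The index `2n+α` of the characteristic direction `ξ_α = e_{2n+α}`. -/
def idxA (n s : ℕ) (α : Fin s) : Fin (2*n+s) := ⟨2*n + (α : ℕ), by omega⟩

/-- The index `i` for `1 ≤ i ≤ n` (0-based). -/
def idxI (n s : ℕ) (i : Fin n) : Fin (2*n+s) := ⟨(i : ℕ), by omega⟩

/-- The index `n+i` for `1 ≤ i ≤ n` (0-based). -/
def idxNI (n s : ℕ) (i : Fin n) : Fin (2*n+s) := ⟨n + (i : ℕ), by omega⟩

section aux
variable {n s : ℕ}

lemma phi_idxI (v : EuclideanSpace ℝ (Fin (2*n+s))) (i : Fin n) :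
    phi n s v (idxI n s i) = v (idxNI n s i) := by
  simp only [phi, idxI, idxNI, PiLp.toLp_apply]
  rw [dif_pos i.2]

lemma phi_idxNI (v : EuclideanSpace ℝ (Fin (2*n+s))) (i : Fin n) :
    phi n s v (idxNI n s i) = -v (idxI n s i) := by
  simp only [phi, idxNI, idxI, PiLp.toLp_apply]
  rw [dif_neg (by omega), dif_pos (by omega)]
  have h : n + (i:ℕ) - n = (i:ℕ) := by omega
  simp only [neg_inj]
  exact congrArg v (Fin.ext h)

lemma phi_idxA (v : EuclideanSpace ℝ (Fin (2*n+s))) (α : Fin s) :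
    phi n s v (idxA n s α) = 0 := by
  simp only [phi, idxA, PiLp.toLp_apply]
  rw [dif_neg (by omega), dif_neg (by omega)]

lemma sum_split (f : Fin (2*n+s) → ℝ) :
    ∑ k, f k = (∑ i : Fin n, f (idxI n s i)) + (∑ i : Fin n, f (idxNI n s i))
      + ∑ α : Fin s, f (idxA n s α) := by
  rw [Fin.sum_univ_add (f := f)]
  rw [Fintype.sum_equiv (finCongr (two_mul n)) _
      (fun j : Fin (n+n) => f (Fin.castAdd s ((finCongr (two_mul n)).symm j)))
      (fun i => by simp)]
  rw [Fin.sum_univ_add]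
  congr 1

lemma inner_phi (v w : EuclideanSpace ℝ (Fin (2*n+s))) :
    ⟪phi n s v, w⟫ = ∑ i : Fin n,
      (v (idxNI n s i) * w (idxI n s i) - v (idxI n s i) * w (idxNI n s i)) := by
  rw [PiLp.inner_apply]
  simp only [RCLike.inner_apply, conj_trivial]
  conv_lhs => enter [2, k]; rw [mul_comm]
  rw [sum_split (fun k => phi n s v k * w k)]
  simp [phi_idxI, phi_idxNI, phi_idxA, Finset.sum_sub_distrib]
  ring

end aux

section aux2
variable {n s : ℕ}

lemma phi_skew (v : EuclideanSpace ℝ (Fin (2*n+s))) : ⟪phi n s v, v⟫ = 0 := by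
  rw [inner_phi]
  apply Finset.sum_eq_zero
  intro i _
  ring

lemma phi_add (v w : EuclideanSpace ℝ (Fin (2*n+s))) :
    phi n s (v + w) = phi n s v + phi n s w := by
  ext k
  simp only [phi, PiLp.add_apply, PiLp.toLp_apply]
  split_ifs <;> simp <;> ring

lemma phi_smul (c : ℝ) (v : EuclideanSpace ℝ (Fin (2*n+s))) :
    phi n s (c • v) = c • phi n s v := by
  ext k
  simp only [phi, PiLp.smul_apply, smul_eq_mul, PiLp.toLp_apply]
  split_ifs <;> simp <;> ring

noncomputable def phiL (n s : ℕ) :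
    EuclideanSpace ℝ (Fin (2*n+s)) →ₗ[ℝ] EuclideanSpace ℝ (Fin (2*n+s)) where
  toFun := phi n s
  map_add' := phi_add
  map_smul' := phi_smul

lemma phi_continuous : Continuous (phi n s) :=
  (phiL n s).continuous_of_finiteDimensional

lemma inner_phi_phi (v : EuclideanSpace ℝ (Fin (2*n+s)))
    (hleg : ∀ α : Fin s, v (idxA n s α) = 0) :
    ⟪phi n s v, phi n s v⟫ = ⟪v, v⟫ := by
  rw [inner_phi]
  have : ⟪v, v⟫ = ∑ k, v k * v k := by
    rw [PiLp.inner_apply]; simp [RCLike.inner_apply, ← sq]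
  rw [this, sum_split (fun k => v k * v k)]
  simp only [phi_idxI, phi_idxNI, hleg, mul_zero, Finset.sum_const_zero, add_zero,
    mul_neg, sub_neg_eq_add]
  rw [Finset.sum_add_distrib]
  simp only [← sq]
  ring

end aux2

section decomp
variable {n s : ℕ}

lemma idxA_inj (α β : Fin s) : idxA n s α = idxA n s β ↔ α = β := by
  constructor
  · intro h
    have := congrArg Fin.val h
    simp only [idxA] at this
    exact Fin.ext (by omega)
  · intro h; rw [h]

lemma decomp (T V x : EuclideanSpace ℝ (Fin (2*n+s)))
    (hT : ⟪T,T⟫ = 1) (hV : ⟪V,V⟫ = 1) (hTV : ⟪T,V⟫ = 0)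
    (hTa : ∀ α : Fin s, T (idxA n s α) = 0) (hVa : ∀ α : Fin s, V (idxA n s α) = 0)
    (hx : x ∈ Submodule.span ℝ (({T, V} : Set _) ∪
      Set.range (fun α : Fin s => EuclideanSpace.single (idxA n s α) (1:ℝ)))) :
    x = ⟪T, x⟫ • T + ⟪V, x⟫ • V +
      ∑ α : Fin s, x (idxA n s α) • EuclideanSpace.single (idxA n s α) (1:ℝ) := by
  have hVT : ⟪V, T⟫ = 0 := by rw [real_inner_comm]; exact hTV
  induction hx using Submodule.span_induction with
  | mem y hy =>
    rcases hy with (rfl | rfl) | ⟨β, rfl⟩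
    · simp [hT, hVT, hTa]; rw [← real_inner_self_eq_norm_sq, hT, one_smul]
    · simp [hV, hTV, hVa]; rw [← real_inner_self_eq_norm_sq, hV, one_smul]
    · have hT' : ⟪T, EuclideanSpace.single (idxA n s β) (1:ℝ)⟫ = 0 := by
        rw [EuclideanSpace.inner_single_right]; simp [hTa]
      have hV' : ⟪V, EuclideanSpace.single (idxA n s β) (1:ℝ)⟫ = 0 := by
        rw [EuclideanSpace.inner_single_right]; simp [hVa]
      rw [hT', hV']
      simp only [zero_smul, zero_add]
      simp only [EuclideanSpace.single_apply, idxA_inj, ite_smul, one_smul, zero_smul]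
      rw [Finset.sum_ite_eq' Finset.univ β
        (fun α => EuclideanSpace.single (idxA n s α) (1:ℝ))]
      simp
  | zero => simp
  | add a b ha hb iha ihb =>
    conv_lhs => rw [iha, ihb]
    simp only [inner_add_right, PiLp.add_apply, add_smul, Finset.sum_add_distrib]
    abel
  | smul r a ha iha =>
    conv_lhs => rw [iha]
    simp only [real_inner_smul_right, PiLp.smul_apply, smul_eq_mul, mul_smul,
      Finset.smul_sum, smul_add]

end decomp

/-- A Legendre `φ`-circle of osculating order 2 in the standard `C`-manifold `ℝ^{2n+s}` is
a magnetic circle generated by the magnetic field `F_{±κ₁}`: there is a charge `q` with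
`|q| = κ₁` such that `γ'' = -q·φ(γ')`. -/
theorem legendre_phi_circle_is_magnetic
    (n s : ℕ) (hn : 0 < n) (hs : 0 < s)
    (γ v₂ : ℝ → EuclideanSpace ℝ (Fin (2*n+s)))
    (hγ : Differentiable ℝ γ) (hγ' : Differentiable ℝ (deriv γ))
    (hv₂ : Differentiable ℝ v₂)
    (hunit : ∀ t : ℝ, ‖deriv γ t‖ = 1)
    (horth : ∀ t : ℝ, ‖v₂ t‖ = 1 ∧ ⟪deriv γ t, v₂ t⟫ = 0)
    (κ₁ : ℝ) (hκ₁pos : 0 < κ₁)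
    (hfr1 : ∀ t : ℝ, deriv (deriv γ) t = κ₁ • v₂ t)
    (hfr2 : ∀ t : ℝ, deriv v₂ t = (-κ₁) • deriv γ t)
    (hleg : ∀ t : ℝ, ∀ α : Fin s,
      deriv γ t (idxA n s α) = 0 ∧ v₂ t (idxA n s α) = 0)
    (hinv : ∀ t : ℝ, phi n s (deriv γ t) ∈ Submodule.span ℝ
      ({deriv γ t, v₂ t} ∪
        Set.range (fun α : Fin s => EuclideanSpace.single (idxA n s α) (1 : ℝ)))) :
    ∃ q : ℝ, |q| = κ₁ ∧ ∀ t : ℝ, deriv (deriv γ) t = (-q) • phi n s (deriv γ t) := by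
  classical
  set c : ℝ → ℝ := fun t => ⟪v₂ t, phi n s (deriv γ t)⟫ with hc
  have hdecomp : ∀ t, phi n s (deriv γ t) = c t • v₂ t := by
    intro t
    have hT1 : ⟪deriv γ t, deriv γ t⟫ = 1 := by
      rw [real_inner_self_eq_norm_sq, hunit t]; norm_num
    have hV1 : ⟪v₂ t, v₂ t⟫ = 1 := by
      rw [real_inner_self_eq_norm_sq, (horth t).1]; norm_num
    have h := decomp (deriv γ t) (v₂ t) (phi n s (deriv γ t)) hT1 hV1 (horth t).2
      (fun α => (hleg t α).1) (fun α => (hleg t α).2) (hinv t)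
    have h1 : ⟪deriv γ t, phi n s (deriv γ t)⟫ = 0 := by
      rw [real_inner_comm]; exact phi_skew _
    have h2 : ∀ α : Fin s, phi n s (deriv γ t) (idxA n s α) = 0 :=
      fun α => phi_idxA _ α
    rw [h, h1]
    simp [h2, hc]
  have hcsq : ∀ t, c t ^ 2 = 1 := by
    intro t
    have h := inner_phi_phi (deriv γ t) (fun α => (hleg t α).1)
    rw [hdecomp t, real_inner_smul_left, real_inner_smul_right] at h
    have hT1 : ⟪deriv γ t, deriv γ t⟫ = 1 := by
      rw [real_inner_self_eq_norm_sq, hunit t]; norm_num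
    have hV1 : ⟪v₂ t, v₂ t⟫ = 1 := by
      rw [real_inner_self_eq_norm_sq, (horth t).1]; norm_num
    rw [hT1, hV1] at h
    nlinarith [h]
  have hccont : Continuous c :=
    Continuous.inner hv₂.continuous (phi_continuous.comp hγ'.continuous)
  have key : ∀ a b : ℝ, c a = -1 → c b = 1 → False := by
    intro a b hav hbv
    have h0 : (0:ℝ) ∈ Set.Icc (c a) (c b) := by
      rw [hav, hbv]; constructor <;> norm_num
    obtain ⟨τ, hτ⟩ := intermediate_value_univ a b hccont h0
    have := hcsq τ
    rw [hτ] at this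
    norm_num at this
  have hpm : ∀ t, c t = 1 ∨ c t = -1 := by
    intro t
    have h := hcsq t
    have : (c t - 1) * (c t + 1) = 0 := by nlinarith
    rcases mul_eq_zero.mp this with h' | h'
    · left; linarith
    · right; linarith
  have hconst : ∀ t, c t = c 0 := by
    intro t
    rcases hpm t with h1 | h1 <;> rcases hpm 0 with h2 | h2
    · rw [h1, h2]
    · exact absurd (key 0 t h2 h1) not_false
    · exact absurd (key t 0 h1 h2) not_false
    · rw [h1, h2]
  refine ⟨-(κ₁ * c 0), ?_, ?_⟩
  · have habs : |c 0| = 1 := by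
      rcases hpm 0 with h | h <;> rw [h] <;> norm_num
    rw [abs_neg, abs_mul, habs, mul_one, abs_of_pos hκ₁pos]
  · intro t
    rw [hfr1 t, hdecomp t, neg_neg, smul_smul]
    have : κ₁ * c 0 * c t = κ₁ := by
      rw [hconst t]
      have := hcsq 0
      nlinarith
    rw [this]
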